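/- Fix n ≥ 1 and i in [n]. Define strings c_1, ..., c_{2^n} in {0,1}^n by c_1 = 0^n, and for j ≥ 2, c_j is obtained from c_{j-1} by flipping bit h_{ij}, where h_{ij} = ((ζ(j-1) + i - 2) mod n) + 1 with ζ(0) := 0 and ζ the ruler function. Then c_1, c_2, ..., c_{2^n} are pairwise distinct (hence enumerate all of {0,1}^n). -/

import Mathlib

/-- Fix `n ≥ 1` and `i ∈ [n]`.  Define strings `c_1, …, c_{2^n}` in `{0,1}^n` by `c_1 = 0^n`
and, for `j ≥ 2`, `c_j` is obtained from `c_{j-1}` by flipping bit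
`h_{ij} = ((ζ(j-1) + i - 2) mod n) + 1`, where `ζ` is the ruler function and `ζ(0) := 0`.
Then `c_1, c_2, …, c_{2^n}` are pairwise distinct. -/
theorem stmt1 (n : ℕ) (hn : 1 ≤ n) (i : ℕ) (hi1 : 1 ≤ i) (hin : i ≤ n)
    (ζ : ℕ → ℕ) (hζ0 : ζ 0 = 0)
    (hζ : ∀ m : ℕ, 1 ≤ m → IsGreatest {k : ℕ | 2 ^ (k - 1) ∣ m} (ζ m))
    (c : ℕ → ℕ → ZMod 2) (hc1 : c 1 = fun _ => 0)
    (hstep : ∀ j : ℕ, 2 ≤ j → j ≤ 2 ^ n →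
      c j = Function.update (c (j - 1))
        ((((ζ (j - 1) : ℤ) + (i : ℤ) - 2) % (n : ℤ)).toNat + 1)
        (c (j - 1) ((((ζ (j - 1) : ℤ) + (i : ℤ) - 2) % (n : ℤ)).toNat + 1) + 1)) :
    ∀ j ∈ Finset.Icc 1 (2 ^ n), ∀ j' ∈ Finset.Icc 1 (2 ^ n), j ≠ j' → c j ≠ c j' := by
  have hfact : Fact (Nat.Prime 2) := ⟨Nat.prime_two⟩
  set P : ℕ → ℕ := fun m => (((ζ m : ℤ) + (i : ℤ) - 2) % (n : ℤ)).toNat + 1 with hPdef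
  -- ζ m = padicValNat 2 m + 1 for m ≥ 1
  have hζval : ∀ m : ℕ, 1 ≤ m → ζ m = padicValNat 2 m + 1 := by
    intro m hm
    obtain ⟨hmem, hub⟩ := hζ m hm
    have hm0 : m ≠ 0 := by omega
    have h1 : 1 ≤ ζ m := hub (by simp)
    have h2 : padicValNat 2 m + 1 ≤ ζ m := by
      apply hub
      simpa using (pow_padicValNat_dvd (p := 2) (n := m))
    have h3 : ζ m - 1 ≤ padicValNat 2 m :=
      (padicValNat_dvd_iff_le hm0).mp hmem
    omega
  -- valuation bound
  have hvlt : ∀ m : ℕ, 1 ≤ m → m < 2 ^ n → padicValNat 2 m < n := by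
    intro m hm hmn
    have hd : 2 ^ padicValNat 2 m ∣ m := pow_padicValNat_dvd
    have hle : 2 ^ padicValNat 2 m ≤ m := Nat.le_of_dvd (by omega) hd
    have : 2 ^ padicValNat 2 m < 2 ^ n := lt_of_le_of_lt hle hmn
    exact (Nat.pow_lt_pow_iff_right (by norm_num)).mp this
  -- P in nat terms
  have hP : ∀ m : ℕ, 1 ≤ m → P m = (padicValNat 2 m + (i - 1)) % n + 1 := by
    intro m hm
    have hz := hζval m hm
    have h1 : ((ζ m : ℤ) + (i : ℤ) - 2) = ((padicValNat 2 m + (i - 1) : ℕ) : ℤ) := by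
      push_cast [hz]; omega
    simp only [hPdef, h1, ← Int.natCast_mod, Int.toNat_natCast]
  -- injectivity of P on [1, 2^n)
  have hPinj : ∀ m1 m2 : ℕ, 1 ≤ m1 → m1 < 2 ^ n → 1 ≤ m2 → m2 < 2 ^ n →
      P m1 = P m2 → padicValNat 2 m1 = padicValNat 2 m2 := by
    intro m1 m2 h1 h1' h2 h2' hpe
    rw [hP m1 h1, hP m2 h2] at hpe
    have hmod : (padicValNat 2 m1 + (i - 1)) % n = (padicValNat 2 m2 + (i - 1)) % n := by
      omega
    have hmeq : padicValNat 2 m1 ≡ padicValNat 2 m2 [MOD n] :=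
      (Nat.ModEq.add_right_cancel' (i - 1) hmod)
    have hb1 := hvlt m1 h1 h1'
    have hb2 := hvlt m2 h2 h2'
    have := hmeq
    unfold Nat.ModEq at this
    rwa [Nat.mod_eq_of_lt hb1, Nat.mod_eq_of_lt hb2] at this
  -- unique maximal valuation in an interval
  have hmax : ∀ j j' : ℕ, 1 ≤ j → j < j' → ∃ m0 ∈ Finset.Ico j j',
      ∀ m ∈ Finset.Ico j j', m ≠ m0 → padicValNat 2 m < padicValNat 2 m0 := by
    intro j j' hj hlt
    obtain ⟨m0, hm0, hmaxv⟩ := Finset.exists_max_image (Finset.Ico j j') (padicValNat 2)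
      ⟨j, by simp [hlt]⟩
    refine ⟨m0, hm0, ?_⟩
    intro m hm hne
    by_contra hle
    have heq : padicValNat 2 m = padicValNat 2 m0 := by
      have := hmaxv m hm; omega
    -- set a < b both with valuation v
    set v := padicValNat 2 m0 with hv
    have hma : j ≤ m ∧ m < j' := Finset.mem_Ico.mp hm
    have hmb : j ≤ m0 ∧ m0 < j' := Finset.mem_Ico.mp hm0
    set a := min m m0 with ha
    set b := max m m0 with hb
    have hab : a < b := by omega
    have hva : padicValNat 2 a = v := by rcases min_choice m m0 with h | h <;> rw [ha, h] <;> omega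
    have hvb : padicValNat 2 b = v := by rcases max_choice m m0 with h | h <;> rw [hb, h] <;> omega
    have ha0 : a ≠ 0 := by omega
    have hb0 : b ≠ 0 := by omega
    have hda : 2 ^ v ∣ a := hva ▸ pow_padicValNat_dvd
    have hdb : 2 ^ v ∣ b := hvb ▸ pow_padicValNat_dvd
    obtain ⟨a', ha'⟩ := hda
    obtain ⟨b', hb'⟩ := hdb
    have ha'odd : ¬ 2 ∣ a' := by
      intro ⟨t, ht⟩
      have : 2 ^ (v + 1) ∣ a := ⟨t, by rw [ha', ht]; ring⟩
      exact (hva ▸ pow_succ_padicValNat_not_dvd (p := 2) ha0) this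
    have hb'odd : ¬ 2 ∣ b' := by
      intro ⟨t, ht⟩
      have : 2 ^ (v + 1) ∣ b := ⟨t, by rw [hb', ht]; ring⟩
      exact (hvb ▸ pow_succ_padicValNat_not_dvd (p := 2) hb0) this
    have hpow : 0 < 2 ^ v := Nat.pow_pos (by norm_num)
    have ha'b' : a' < b' := by
      by_contra h
      have : b ≤ a := by rw [ha', hb']; exact Nat.mul_le_mul_left _ (by omega)
      omega
    have ha'1 : a' + 1 ≤ b' := by omega
    have heven : 2 ∣ a' + 1 := by
      rcases Nat.even_or_odd a' with he | ho
      · exact absurd he.two_dvd ha'odd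
      · omega
    set x := 2 ^ v * (a' + 1) with hx
    have hxa : a < x := by
      rw [ha', hx]; exact (Nat.mul_lt_mul_left hpow).mpr (by omega)
    have hxb : x ≤ b := by
      rw [hb', hx]; exact Nat.mul_le_mul_left _ ha'1
    have hxmem : x ∈ Finset.Ico j j' := Finset.mem_Ico.mpr ⟨by omega, by omega⟩
    have hx0 : x ≠ 0 := by positivity
    have hxd : 2 ^ (v + 1) ∣ x := by
      obtain ⟨t, ht⟩ := heven
      exact ⟨t, by rw [hx, ht, pow_succ]; ring⟩
    have hxv : v + 1 ≤ padicValNat 2 x := (padicValNat_dvd_iff_le hx0).mp hxd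
    have := hmaxv x hxmem
    omega
  -- counting lemma
  have hA : ∀ j : ℕ, 1 ≤ j → ∀ j' : ℕ, j ≤ j' → j' ≤ 2 ^ n → ∀ q : ℕ,
      c j' q = c j q + (((Finset.Ico j j').filter (fun m => P m = q)).card : ZMod 2) := by
    intro j hj
    refine Nat.le_induction ?_ ?_
    · intro _ q; simp
    · intro j' hjj' ih hle q
      have ih' := ih (by omega)
      have hstep' := hstep (j' + 1) (by omega) hle
      have hsub : j' + 1 - 1 = j' := by omega
      rw [hsub] at hstep'
      have hins : Finset.Ico j (j' + 1) = insert j' (Finset.Ico j j') := by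
        rw [Nat.Ico_succ_right_eq_insert_Ico hjj']
      have hnotmem : j' ∉ Finset.Ico j j' := by simp
      rw [hstep', hins, Finset.filter_insert]
      by_cases hq : P j' = q
      · subst hq
        rw [if_pos rfl, Finset.card_insert_of_notMem (fun h => hnotmem (Finset.mem_filter.mp h).1)]
        have : Function.update (c j') (P j') (c j' (P j') + 1) (P j') = c j' (P j') + 1 := by
          simp [hPdef]
        rw [this, ih' (P j')]
        push_cast
        ring
      · rw [if_neg hq]
        have : Function.update (c j') (P j') (c j' (P j') + 1) q = c j' q := by
          apply Function.update_of_ne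
          exact fun h => hq (h ▸ rfl)
        rw [this, ih' q]
  -- main argument for j < j'
  have main : ∀ j j' : ℕ, 1 ≤ j → j < j' → j' ≤ 2 ^ n → c j ≠ c j' := by
    intro j j' hj hlt hle hcc
    obtain ⟨m0, hm0, hmaxm⟩ := hmax j j' hj hlt
    have hm0' := Finset.mem_Ico.mp hm0
    have hfilter : (Finset.Ico j j').filter (fun m => P m = P m0) = {m0} := by
      ext m
      simp only [Finset.mem_filter, Finset.mem_singleton, Finset.mem_Ico]
      constructor
      · rintro ⟨⟨h1, h2⟩, hpe⟩
        by_contra hne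
        have hvlt' := hmaxm m (Finset.mem_Ico.mpr ⟨h1, h2⟩) hne
        have := hPinj m m0 (by omega) (by omega) (by omega) (by omega) hpe
        omega
      · rintro rfl
        exact ⟨hm0', rfl⟩
    have hAx := hA j hj j' (le_of_lt hlt) hle (P m0)
    rw [hcc, hfilter] at hAx
    simp at hAx
  intro j hj j' hj' hne
  simp only [Finset.mem_Icc] at hj hj'
  rcases Nat.lt_or_ge j j' with h | h
  · exact main j j' hj.1 h hj'.2
  · have h' : j' < j := by omega
    exact fun hcc => main j' j hj'.1 h' hj.2 hcc.symm
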